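/- For every positive integer N, the index of the principal congruence subgroup Γ(N) in SL(2,ℤ) equals N³ ∏_{p | N} (1 − 1/p²), the product running over the prime divisors p of N; equivalently, [SL(2,ℤ) : Γ(N)] · ∏_{p | N} p² = N³ · ∏_{p | N} (p² − 1). -/

import Mathlib

open Matrix MatrixGroups

noncomputable def slRingEquiv {R S : Type} [CommRing R] [CommRing S] (e : R ≃+* S) :
    SL(2, R) ≃ SL(2, S) where
  toFun := Matrix.SpecialLinearGroup.map (e : R →+* S)
  invFun := Matrix.SpecialLinearGroup.map (e.symm : S →+* R)
  left_inv g := Subtype.ext <| by ext i j; simp [Matrix.SpecialLinearGroup.map_apply_coe]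
  right_inv g := Subtype.ext <| by ext i j; simp [Matrix.SpecialLinearGroup.map_apply_coe]

noncomputable def slProdEquiv {R S : Type} [CommRing R] [CommRing S] :
    SL(2, R × S) ≃ SL(2, R) × SL(2, S) where
  toFun g := (Matrix.SpecialLinearGroup.map (RingHom.fst R S) g,
      Matrix.SpecialLinearGroup.map (RingHom.snd R S) g)
  invFun p := ⟨Matrix.of fun i j => (p.1.1 i j, p.2.1 i j), by
    have hd1 := p.1.2
    have hd2 := p.2.2
    rw [Matrix.det_fin_two] at hd1 hd2 ⊢
    exact Prod.ext (by simpa using hd1) (by simpa using hd2)⟩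
  left_inv g := Subtype.ext <| by ext i j <;> rfl
  right_inv p := Prod.ext (Subtype.ext <| by ext i j; rfl) (Subtype.ext <| by ext i j; rfl)

section Fibers

variable {R : Type} [CommRing R]

/-- SL(2,R) as a sigma type of rows. -/
def slSigmaEquiv : SL(2, R) ≃ Σ ab : R × R, {cd : R × R // ab.1 * cd.2 - ab.2 * cd.1 = 1} where
  toFun g := ⟨(g.1 0 0, g.1 0 1), ⟨(g.1 1 0, g.1 1 1), by
    have h := g.2; rw [Matrix.det_fin_two] at h; exact h⟩⟩
  invFun x := ⟨!![x.1.1, x.1.2; x.2.1.1, x.2.1.2], by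
    rw [Matrix.det_fin_two]; simpa using x.2.2⟩
  left_inv g := Subtype.ext <| by
    ext i j; fin_cases i <;> fin_cases j <;> simp
  right_inv x := by
    rcases x with ⟨⟨a, b⟩, ⟨⟨c, d⟩, h⟩⟩
    simp

/-- fiber when `a` is a unit -/
def fiberEquivLeft (u : Rˣ) (b : R) : R ≃ {cd : R × R // (u : R) * cd.2 - b * cd.1 = 1} where
  toFun x := ⟨(x, ↑u⁻¹ * (1 + b * x)), by
    show (u : R) * (↑u⁻¹ * (1 + b * x)) - b * x = 1
    linear_combination (1 + b * x) * Units.mul_inv u⟩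
  invFun s := s.1.1
  left_inv x := rfl
  right_inv s := Subtype.ext <| Prod.ext rfl <| by
    rcases s with ⟨⟨c, d⟩, h⟩
    have h' : (u : R) * d - b * c = 1 := h
    show (↑u⁻¹ : R) * (1 + b * c) = d
    linear_combination (-(↑u⁻¹ : R)) * h' + d * Units.inv_mul u

/-- fiber when `b` is a unit -/
def fiberEquivRight (a : R) (u : Rˣ) : R ≃ {cd : R × R // a * cd.2 - (u : R) * cd.1 = 1} where
  toFun x := ⟨(↑u⁻¹ * (a * x - 1), x), by
    show a * x - (u : R) * (↑u⁻¹ * (a * x - 1)) = 1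
    linear_combination (1 - a * x) * Units.mul_inv u⟩
  invFun s := s.1.2
  left_inv x := rfl
  right_inv s := Subtype.ext <| Prod.ext (by
    rcases s with ⟨⟨c, d⟩, h⟩
    have h' : a * d - (u : R) * c = 1 := h
    show (↑u⁻¹ : R) * (a * d - 1) = c
    linear_combination (↑u⁻¹ : R) * h' + c * Units.inv_mul u) rfl

end Fibers

section PrimePow
open Finset

theorem zmod_nonunit_iff {p k : ℕ} (hp : p.Prime) (hk : k ≠ 0) (a : ZMod (p^k)) :
    ¬ IsUnit a ↔ ((a.val : ZMod p) = 0) := by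
  haveI : NeZero (p^k) := ⟨pow_ne_zero k hp.pos.ne'⟩
  rw [ZMod.natCast_eq_zero_iff]
  conv_lhs => rw [show a = ((a.val : ℕ) : ZMod (p^k)) from (ZMod.natCast_zmod_val a).symm]
  rw [ZMod.isUnit_iff_coprime, Nat.coprime_pow_right_iff (Nat.pos_of_ne_zero hk),
    Nat.coprime_comm, hp.coprime_iff_not_dvd]
  tauto

theorem card_nonunits_zmod (p k : ℕ) (hp : p.Prime) (hk : k ≠ 0) :
    Nat.card {a : ZMod (p^k) // ¬ IsUnit a} = p^(k-1) := by
  haveI : NeZero (p^k) := ⟨pow_ne_zero k hp.pos.ne'⟩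
  classical
  have e : (ZMod (p^k))ˣ ≃ {a : ZMod (p^k) // IsUnit a} :=
    ⟨fun u => ⟨u, u.isUnit⟩, fun a => a.2.unit, fun u => Units.ext rfl,
      fun a => Subtype.ext a.2.unit_spec⟩
  have h1 : Fintype.card {a : ZMod (p^k) // IsUnit a} = (p^k).totient := by
    rw [← Fintype.card_congr e, ZMod.card_units_eq_totient]
  rw [Nat.card_eq_fintype_card, Fintype.card_subtype_compl, h1, ZMod.card,
    Nat.totient_prime_pow hp (Nat.pos_of_ne_zero hk)]
  obtain ⟨k', rfl⟩ : ∃ k', k = k' + 1 := ⟨k - 1, by omega⟩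
  simp only [Nat.add_sub_cancel, pow_succ]
  rw [← Nat.mul_sub]
  have : p - (p - 1) = 1 := by have := hp.two_le; omega
  rw [this, mul_one]

theorem card_SL2_zmod_prime_pow (p k : ℕ) (hp : p.Prime) (hk : k ≠ 0) :
    Nat.card SL(2, ZMod (p^k)) = p^(3*k) - p^(3*k-2) := by
  classical
  haveI : Fact p.Prime := ⟨hp⟩
  haveI : NeZero (p^k) := ⟨pow_ne_zero k hp.pos.ne'⟩
  have key : ∀ ab : ZMod (p^k) × ZMod (p^k),
      Fintype.card {cd : ZMod (p^k) × ZMod (p^k) // ab.1 * cd.2 - ab.2 * cd.1 = 1}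
      = if IsUnit ab.1 ∨ IsUnit ab.2 then p^k else 0 := by
    rintro ⟨a, b⟩
    by_cases ha : IsUnit a
    · obtain ⟨u, rfl⟩ := ha
      rw [if_pos (Or.inl u.isUnit), ← Fintype.card_congr (fiberEquivLeft u b), ZMod.card]
    · by_cases hb : IsUnit b
      · obtain ⟨u, rfl⟩ := hb
        rw [if_pos (Or.inr u.isUnit), ← Fintype.card_congr (fiberEquivRight a u), ZMod.card]
      · rw [if_neg (by tauto), Fintype.card_eq_zero_iff]
        constructor
        rintro ⟨⟨c, d⟩, h⟩
        have hφ : ∀ x : ZMod (p^k), ¬ IsUnit x →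
            ((ZMod.castHom (dvd_pow_self p hk) (ZMod p)) x = 0) := by
          intro x hx
          rw [ZMod.castHom_apply, ← ZMod.natCast_val]
          exact (zmod_nonunit_iff hp hk x).mp hx
        have h2 : (0 : ZMod p) = 1 := by
          have h3 := congrArg (ZMod.castHom (dvd_pow_self p hk) (ZMod p)) h
          simpa only [map_sub, _root_.map_mul, _root_.map_one, hφ a ha, hφ b hb,
            zero_mul, mul_zero, sub_zero, zero_sub, neg_zero, sub_self] using h3
        exact zero_ne_one h2
  have hcard : Nat.card SL(2, ZMod (p^k)) = ∑ ab : ZMod (p^k) × ZMod (p^k),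
      Fintype.card {cd : ZMod (p^k) × ZMod (p^k) // ab.1 * cd.2 - ab.2 * cd.1 = 1} := by
    rw [Nat.card_congr slSigmaEquiv, Nat.card_eq_fintype_card, Fintype.card_sigma]
  rw [hcard]
  simp_rw [key]
  rw [Finset.sum_ite, Finset.sum_const, Finset.sum_const_zero, add_zero, smul_eq_mul]
  have hnot : (univ.filter fun ab : ZMod (p^k) × ZMod (p^k) =>
      ¬(IsUnit ab.1 ∨ IsUnit ab.2)).card = p^(k-1) * p^(k-1) := by
    simp only [not_or]
    rw [← Fintype.card_subtype, ← Nat.card_eq_fintype_card,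
      Nat.card_congr (Equiv.subtypeProdEquivProd
        (p := fun a : ZMod (p^k) => ¬ IsUnit a) (q := fun b : ZMod (p^k) => ¬ IsUnit b)),
      Nat.card_prod, card_nonunits_zmod p k hp hk]
  have hP : (univ.filter fun ab : ZMod (p^k) × ZMod (p^k) =>
      IsUnit ab.1 ∨ IsUnit ab.2).card = p^k * p^k - p^(k-1) * p^(k-1) := by
    have h4 := Finset.card_filter_add_card_filter_not
      (α := ZMod (p^k) × ZMod (p^k)) (s := univ) (fun ab => IsUnit ab.1 ∨ IsUnit ab.2)
    rw [hnot, Finset.card_univ, Fintype.card_prod, ZMod.card] at h4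
    omega
  rw [hP, Nat.sub_mul]
  have e1 : (p^k * p^k) * p^k = p^(3*k) := by rw [← pow_add, ← pow_add]; congr 1; omega
  have e2 : (p^(k-1) * p^(k-1)) * p^k = p^(3*k-2) := by
    rw [← pow_add, ← pow_add]; congr 1; omega
  rw [e1, e2]

end PrimePow

section CardFormula

theorem card_SL2_zmod_mul {m n : ℕ} (h : m.Coprime n) :
    Nat.card SL(2, ZMod (m * n)) = Nat.card SL(2, ZMod m) * Nat.card SL(2, ZMod n) := by
  rw [Nat.card_congr ((slRingEquiv (ZMod.chineseRemainder h)).trans slProdEquiv), Nat.card_prod]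

theorem card_SL2_zmod_one : Nat.card SL(2, ZMod 1) = 1 := by
  haveI : Subsingleton SL(2, ZMod 1) := ⟨fun a b => Subtype.ext (Subsingleton.elim _ _)⟩
  haveI : Unique SL(2, ZMod 1) := ⟨⟨1⟩, fun a => Subsingleton.elim a 1⟩
  exact Nat.card_unique

theorem card_SL2_zmod (N : ℕ) (hN : N ≠ 0) :
    Nat.card SL(2, ZMod N) * ∏ p ∈ N.primeFactors, p ^ 2 =
      N ^ 3 * ∏ p ∈ N.primeFactors, (p ^ 2 - 1) := by
  have hmf := Nat.multiplicative_factorization (fun n => Nat.card SL(2, ZMod n))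
    (fun x y h => card_SL2_zmod_mul h) card_SL2_zmod_one hN
  rw [hmf, Nat.prod_factorization_eq_prod_primeFactors]
  have hN3 : N ^ 3 = ∏ p ∈ N.primeFactors, p ^ (3 * N.factorization p) := by
    conv_lhs => rw [← Nat.factorization_prod_pow_eq_self hN]
    rw [Nat.prod_factorization_eq_prod_primeFactors, ← Finset.prod_pow]
    exact Finset.prod_congr rfl fun p _ => by rw [← pow_mul, mul_comm]
  rw [hN3, ← Finset.prod_mul_distrib, ← Finset.prod_mul_distrib]
  refine Finset.prod_congr rfl fun p hp => ?_
  have hpp : p.Prime := Nat.prime_of_mem_primeFactors hp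
  have hk : N.factorization p ≠ 0 :=
    (hpp.factorization_pos_of_dvd hN (Nat.dvd_of_mem_primeFactors hp)).ne'
  rw [card_SL2_zmod_prime_pow p _ hpp hk, Nat.sub_mul, Nat.mul_sub, mul_one,
    ← pow_add, ← pow_add]
  congr 2
  omega

end CardFormula

section Surjectivity

/-- Lift a pair mod n to a coprime pair. -/
theorem exists_coprime_congr (n c d : ℤ) (hn : n ≠ 0)
    (h : ∀ e : ℤ, e ∣ c → e ∣ d → e ∣ n → e ∣ 1) :
    ∃ c' d' : ℤ, n ∣ c' - c ∧ n ∣ d' - d ∧ IsCoprime c' d' := by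
  set c₀ : ℤ := if c = 0 then n else c with hc₀def
  have hc₀ : c₀ ≠ 0 := by
    rw [hc₀def]; split_ifs <;> assumption
  have hc₀c : n ∣ c₀ - c := by
    rw [hc₀def]; split_ifs with hc
    · rw [hc, sub_zero]
    · simp
  have h' : ∀ e : ℤ, e ∣ c₀ → e ∣ d → e ∣ n → e ∣ 1 := by
    intro e he hd hn'
    refine h e ?_ hd hn'
    have h1 : e ∣ c₀ - c := hn'.trans hc₀c
    have : c = c₀ - (c₀ - c) := by ring
    rw [this]
    exact dvd_sub he h1
  set m : ℕ := c₀.natAbs with hmdef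
  have hm : m ≠ 0 := Int.natAbs_ne_zero.mpr hc₀
  set t : ℕ := (m.primeFactors.filter fun p : ℕ => ¬ ((p : ℤ) ∣ d)).prod id with htdef
  refine ⟨c₀, d + n * t, hc₀c, ⟨t, by ring⟩, ?_⟩
  rw [Int.isCoprime_iff_gcd_eq_one]
  refine Nat.coprime_of_dvd ?_
  intro P hP hPm hPd'
  have hPc₀ : (P : ℤ) ∣ c₀ := Int.dvd_natAbs.mp (Int.natCast_dvd_natCast.mpr hPm)
  have hPd'z : (P : ℤ) ∣ d + n * t := Int.dvd_natAbs.mp (Int.natCast_dvd_natCast.mpr hPd')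
  by_cases hd : (P : ℤ) ∣ d
  · have hPnt : (P : ℤ) ∣ n * t := by
      have h2 := dvd_sub hPd'z hd
      simpa using h2
    rcases ((Nat.prime_iff_prime_int.mp hP).dvd_mul.mp hPnt) with hPn | hPt
    · have h3 : (P : ℤ) ∣ 1 := h' P hPc₀ hd hPn
      have h4 : P ∣ 1 := by exact_mod_cast h3
      exact hP.one_lt.ne' (Nat.dvd_one.mp h4)
    · have hPtn : P ∣ t := Int.natCast_dvd_natCast.mp (by exact_mod_cast hPt)
      obtain ⟨q, hq, hq'⟩ := (hP.prime.dvd_finset_prod_iff id).mp hPtn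
      rw [Finset.mem_filter] at hq
      rw [← (Nat.prime_dvd_prime_iff_eq hP (Nat.prime_of_mem_primeFactors hq.1)).mp hq'] at hq
      exact hq.2 hd
  · have hPmem : P ∈ m.primeFactors.filter fun p : ℕ => ¬ ((p : ℤ) ∣ d) :=
      Finset.mem_filter.mpr ⟨Nat.mem_primeFactors.mpr ⟨hP, hPm, hm⟩, hd⟩
    have hPt : P ∣ t := Finset.dvd_prod_of_mem id hPmem
    have hPnt : (P : ℤ) ∣ n * t := (Int.natCast_dvd_natCast.mpr hPt).mul_left n
    exact hd (by simpa using dvd_sub hPd'z hPnt)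

/-- Adjust the top row of a candidate matrix to get determinant exactly 1. -/
theorem exists_row_lift (n a b c d : ℤ) (hcd : IsCoprime c d)
    (h : n ∣ a * d - b * c - 1) :
    ∃ a' b' : ℤ, n ∣ a' - a ∧ n ∣ b' - b ∧ a' * d - b' * c = 1 := by
  obtain ⟨u, v, huv⟩ := hcd
  obtain ⟨w, hw⟩ := h
  set t : ℤ := u * (a - v) + v * (b + u) with ht
  refine ⟨v + t * c, -u + t * d, ⟨-(v * w), ?_⟩, ⟨u * w, ?_⟩, by linear_combination huv⟩
  · linear_combination (-v) * hw + a * huv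
  · linear_combination u * hw + b * huv

end Surjectivity

theorem SL2_map_surjective (N : ℕ) (hN : N ≠ 0) :
    Function.Surjective
      (Matrix.SpecialLinearGroup.map (n := Fin 2) (Int.castRingHom (ZMod N))) := by
  haveI : NeZero N := ⟨hN⟩
  intro g
  set a : ℤ := ((g.1 0 0).val : ℤ) with hadef
  set b : ℤ := ((g.1 0 1).val : ℤ) with hbdef
  set c : ℤ := ((g.1 1 0).val : ℤ) with hcdef
  set d : ℤ := ((g.1 1 1).val : ℤ) with hddef
  have hcast : ∀ x : ZMod N, (((x.val : ℤ) : ℤ) : ZMod N) = x := fun x => by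
    rw [Int.cast_natCast, ZMod.natCast_zmod_val]
  have hdet : (N : ℤ) ∣ a * d - b * c - 1 := by
    rw [← ZMod.intCast_zmod_eq_zero_iff_dvd]
    push_cast
    rw [hcast, hcast, hcast, hcast]
    have hdg := g.2
    rw [Matrix.det_fin_two] at hdg
    rw [hdg]
    ring
  have hcd_div : ∀ e : ℤ, e ∣ c → e ∣ d → e ∣ (N : ℤ) → e ∣ 1 := by
    intro e hc hd hn
    obtain ⟨w, hw⟩ := hdet
    have h1 : (1 : ℤ) = a * d - b * c - N * w := by linear_combination -hw
    rw [h1]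
    exact dvd_sub (dvd_sub (hd.mul_left a) (hc.mul_left b)) (hn.mul_right w)
  obtain ⟨c', d', hc', hd', hcd⟩ := exists_coprime_congr N c d (by exact_mod_cast hN) hcd_div
  have hdet' : (N : ℤ) ∣ a * d' - b * c' - 1 := by
    have h1 : a * d' - b * c' - 1 = (a * d - b * c - 1) + a * (d' - d) - b * (c' - c) := by ring
    rw [h1]
    exact dvd_sub (dvd_add hdet (hd'.mul_left a)) (hc'.mul_left b)
  obtain ⟨a', b', ha', hb', hdet1⟩ := exists_row_lift N a b c' d' hcd hdet'
  have key : ∀ x' x : ℤ, (N : ℤ) ∣ x' - x → ((x' : ZMod N) = (x : ZMod N)) := by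
    intro x' x hx
    exact ((ZMod.intCast_eq_intCast_iff x x' N).mpr (Int.modEq_iff_dvd.mpr hx)).symm
  refine ⟨⟨!![a', b'; c', d'], by rw [Matrix.det_fin_two]; simpa using hdet1⟩, ?_⟩
  ext i j
  fin_cases i <;> fin_cases j
  · exact (key a' a ha').trans (hcast (g.1 0 0))
  · exact (key b' b hb').trans (hcast (g.1 0 1))
  · exact (key c' c hc').trans (hcast (g.1 1 0))
  · exact (key d' d hd').trans (hcast (g.1 1 1))

theorem Gamma_index_eq_card (N : ℕ) (hN : N ≠ 0) :
    (CongruenceSubgroup.Gamma N).index = Nat.card SL(2, ZMod N) := by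
  have : CongruenceSubgroup.Gamma N
      = (Matrix.SpecialLinearGroup.map (n := Fin 2) (Int.castRingHom (ZMod N))).ker := rfl
  rw [this, Subgroup.index_ker, MonoidHom.range_eq_top.mpr (SL2_map_surjective N hN),
    Subgroup.card_top]

/-- [SL(2,ℤ) : Γ(N)] = N³ ∏_{p ∣ N} (1 − 1/p²), stated as
[SL(2,ℤ) : Γ(N)] · ∏_{p ∣ N} p² = N³ · ∏_{p ∣ N} (p² − 1). -/
theorem gamma_index (N : ℕ) (hN : 0 < N) :
    (CongruenceSubgroup.Gamma N).index * ∏ p ∈ N.primeFactors, p ^ 2 =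
      N ^ 3 * ∏ p ∈ N.primeFactors, (p ^ 2 - 1) := by
  rw [Gamma_index_eq_card N hN.ne']
  exact card_SL2_zmod N hN.ne'
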